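/- (Residual from difference decay) Suppose F is L-Lipschitz, the P-AGD recursion z_{t+1} − z_t = β_t(z_0 − z_t) − α_t(F(z_t) + c_{t+1}) holds with c_{t+1} ∈ A(z_{t+1}), ‖z_{t+1} − z_t‖ ≤ E/(t+γ), and ‖z_0 − z_t‖ ≤ D for all t, where α_t = 1/(L√(t+γ)) and β_t = γ/(t+γ). Then for every T ≥ 1, ‖F(z_T) + c_T‖ ≤ L(2E + γD)/√(T−1+γ). -/

import Mathlib

open RealInnerProductSpace

def IsMonotoneOp {d : ℕ}
    (A : EuclideanSpace ℝ (Fin d) → Set (EuclideanSpace ℝ (Fin d))) : Prop :=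
  ∀ x y u v, u ∈ A x → v ∈ A y → (0 : ℝ) ≤ ⟪u - v, x - y⟫

def IsMaximallyMonotone {d : ℕ}
    (A : EuclideanSpace ℝ (Fin d) → Set (EuclideanSpace ℝ (Fin d))) : Prop :=
  IsMonotoneOp A ∧ ∀ B, IsMonotoneOp B → (∀ x, A x ⊆ B x) → B = A

/-- Residual from difference decay: if `F` is `L`-Lipschitz, the P-AGD
recursion `z_{t+1} − z_t = β_t(z₀ − z_t) − α_t(F z_t + c_{t+1})` holds with
`c_{t+1} ∈ A z_{t+1}`, `‖z_{t+1} − z_t‖ ≤ E/(t+γ)` and `‖z₀ − z_t‖ ≤ D`,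
where `α_t = 1/(L√(t+γ))` and `β_t = γ/(t+γ)`, then for every `T ≥ 1`,
`‖F z_T + c_T‖ ≤ L(2E + γD)/√(T−1+γ)`. -/
theorem residual_from_decay {d : ℕ}
    (F : EuclideanSpace ℝ (Fin d) → EuclideanSpace ℝ (Fin d))
    (A : EuclideanSpace ℝ (Fin d) → Set (EuclideanSpace ℝ (Fin d)))
    (hA : IsMaximallyMonotone A)
    (L γ D E : ℝ) (hL : 0 < L) (hγ : 2 ≤ γ)
    (hlip : ∀ z w, ‖F z - F w‖ ≤ L * ‖z - w‖)
    (α β : ℕ → ℝ)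
    (hα : ∀ t : ℕ, α t = 1 / (L * Real.sqrt ((t : ℝ) + γ)))
    (hβ : ∀ t : ℕ, β t = γ / ((t : ℝ) + γ))
    (z c : ℕ → EuclideanSpace ℝ (Fin d))
    (hc : ∀ t : ℕ, c (t + 1) ∈ A (z (t + 1)))
    (hrec : ∀ t : ℕ, z (t + 1) - z t =
      β t • (z 0 - z t) - α t • (F (z t) + c (t + 1)))
    (hd : ∀ t : ℕ, ‖z (t + 1) - z t‖ ≤ E / ((t : ℝ) + γ))
    (hD : ∀ t : ℕ, ‖z 0 - z t‖ ≤ D) :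
    ∀ T : ℕ, 1 ≤ T →
      ‖F (z T) + c T‖ ≤ L * (2 * E + γ * D) / Real.sqrt ((T : ℝ) - 1 + γ) := by

  intro T hT
  obtain ⟨t, rfl⟩ : ∃ t, T = t + 1 := ⟨T - 1, (Nat.succ_pred_eq_of_pos hT).symm⟩
  set s : ℝ := (t : ℝ) + γ with hs_def
  have hs2 : (2 : ℝ) ≤ s := by
    have : (0 : ℝ) ≤ (t : ℝ) := Nat.cast_nonneg t
    linarith
  have hs0 : (0 : ℝ) < s := by linarith
  set r : ℝ := Real.sqrt s with hr_def
  have hr0 : 0 < r := Real.sqrt_pos.mpr hs0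
  have hrr : r * r = s := Real.mul_self_sqrt hs0.le
  have hr1 : 1 ≤ r := by nlinarith
  have hrs : r ≤ s := by nlinarith
  have hE : 0 ≤ E := by
    have h0 : (0 : ℝ) ≤ E / (((0 : ℕ) : ℝ) + γ) := le_trans (norm_nonneg _) (hd 0)
    have hγ0 : (0 : ℝ) < ((0 : ℕ) : ℝ) + γ := by push_cast; linarith
    have := (le_div_iff₀ hγ0).mp h0
    linarith [this]
  have hD0 : 0 ≤ D := le_trans (norm_nonneg _) (hD 0)
  have hαt : α t = 1 / (L * r) := by rw [hα t]
  have hα0 : 0 < α t := by rw [hαt]; positivity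
  have hβt : β t = γ / s := by rw [hβ t]
  have hβ0 : 0 ≤ β t := by rw [hβt]; positivity
  have h1 : α t • (F (z t) + c (t + 1)) = β t • (z 0 - z t) - (z (t + 1) - z t) := by
    rw [hrec t]; abel
  have h2 : F (z t) + c (t + 1) = (α t)⁻¹ • (β t • (z 0 - z t) - (z (t + 1) - z t)) := by
    rw [← h1, smul_smul, inv_mul_cancel₀ hα0.ne', one_smul]
  have hcast : ((t + 1 : ℕ) : ℝ) - 1 + γ = s := by push_cast; ring
  rw [hcast]
  have key : ‖F (z (t + 1)) + c (t + 1)‖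
      ≤ L * ‖z (t + 1) - z t‖ + (α t)⁻¹ * (β t * ‖z 0 - z t‖ + ‖z (t + 1) - z t‖) := by
    have e1 : F (z (t + 1)) + c (t + 1)
        = (F (z (t + 1)) - F (z t)) + (F (z t) + c (t + 1)) := by abel
    rw [e1]
    refine (norm_add_le _ _).trans (add_le_add (hlip _ _) ?_)
    rw [h2, norm_smul, norm_inv, Real.norm_eq_abs, abs_of_pos hα0]
    gcongr
    refine (norm_sub_le _ _).trans ?_
    rw [norm_smul, Real.norm_eq_abs, abs_of_nonneg hβ0]
  have hinv : (α t)⁻¹ = L * r := by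
    rw [hαt]; field_simp
  have hdt := hd t
  have hDt := hD t
  calc ‖F (z (t + 1)) + c (t + 1)‖
      ≤ L * ‖z (t + 1) - z t‖ + (α t)⁻¹ * (β t * ‖z 0 - z t‖ + ‖z (t + 1) - z t‖) := key
    _ ≤ L * (E / s) + (L * r) * (γ / s * D + E / s) := by
        rw [hinv, hβt]
        gcongr
    _ = L * (E / s) + (L * γ * D / r + L * E / r) := by
        congr 1
        rw [← hrr]
        field_simp
    _ ≤ L * (E / r) + (L * γ * D / r + L * E / r) := by
        have : E / s ≤ E / r := div_le_div_of_nonneg_left hE hr0 hrs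
        nlinarith
    _ = L * (2 * E + γ * D) / r := by ring
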